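/- Let π₇, π₈, π₉ be 3-dimensional subspaces of V that pairwise intersect in the same 1-dimensional subspace (i.e., π₇ ⊓ π₈ = π₇ ⊓ π₉ = π₈ ⊓ π₉ and this common intersection is 1-dimensional). For i ∈ {7,8,9} let λᵢ be the dual annihilator of πᵢ in the dual space V* = Module.Dual 𝔽₂ V. Then each λᵢ is 2-dimensional, the λᵢ pairwise intersect in the zero subspace, and λ₉ ≤ λ₇ ⊔ λ₈; consequently the join λ₇ ⊔ λ₈ ⊔ λ₉ is 4-dimensional, so {λ₇, λ₈, λ₉} is a regulus in the dual space. -/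

import Mathlib

open Module

lemma ann_finrank (W : Submodule (ZMod 2) (Fin 5 → ZMod 2)) :
    finrank (ZMod 2) W.dualAnnihilator = 5 - finrank (ZMod 2) W := by
  have h := LinearEquiv.finrank_eq (R := ZMod 2) (M := (Fin 5 → ZMod 2) ⧸ W)
    (N := W.dualAnnihilator) (Subspace.quotEquivAnnihilator W)
  have h2 := Submodule.finrank_quotient_add_finrank W
  have h5 : finrank (ZMod 2) (Fin 5 → ZMod 2) = 5 := by simp
  omega

/-- If three planes π₇, π₈, π₉ of `Fin 5 → ZMod 2` pairwise intersect in
the same 1-dimensional subspace, then their dual annihilators λ₇, λ₈, λ₉ in the dual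
space are 2-dimensional, pairwise disjoint, λ₉ ≤ λ₇ ⊔ λ₈, and the join λ₇ ⊔ λ₈ ⊔ λ₉
is 4-dimensional; i.e. {λ₇, λ₈, λ₉} is a regulus in the dual space. -/
theorem stmt_11
    (π₇ π₈ π₉ : Submodule (ZMod 2) (Fin 5 → ZMod 2))
    (h7 : finrank (ZMod 2) π₇ = 3)
    (h8 : finrank (ZMod 2) π₈ = 3)
    (h9 : finrank (ZMod 2) π₉ = 3)
    (hi1 : π₇ ⊓ π₈ = π₇ ⊓ π₉)
    (hi2 : π₇ ⊓ π₈ = π₈ ⊓ π₉)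
    (hidim : finrank (ZMod 2) ↥(π₇ ⊓ π₈) = 1) :
    finrank (ZMod 2) π₇.dualAnnihilator = 2 ∧
    finrank (ZMod 2) π₈.dualAnnihilator = 2 ∧
    finrank (ZMod 2) π₉.dualAnnihilator = 2 ∧
    π₇.dualAnnihilator ⊓ π₈.dualAnnihilator = ⊥ ∧
    π₇.dualAnnihilator ⊓ π₉.dualAnnihilator = ⊥ ∧
    π₈.dualAnnihilator ⊓ π₉.dualAnnihilator = ⊥ ∧
    π₉.dualAnnihilator ≤ π₇.dualAnnihilator ⊔ π₈.dualAnnihilator ∧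
    finrank (ZMod 2) ↥(π₇.dualAnnihilator ⊔ π₈.dualAnnihilator ⊔ π₉.dualAnnihilator) = 4 := by
  have h5 : finrank (ZMod 2) (Fin 5 → ZMod 2) = 5 := by simp
  -- sup of any two planes is ⊤
  have sup_top : ∀ (A B : Submodule (ZMod 2) (Fin 5 → ZMod 2)),
      finrank (ZMod 2) A = 3 → finrank (ZMod 2) B = 3 →
      finrank (ZMod 2) ↥(A ⊓ B) = 1 → A ⊔ B = ⊤ := by
    intro A B hA hB hAB
    have hd := Submodule.finrank_sup_add_finrank_inf_eq A B
    apply Submodule.eq_top_of_finrank_eq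
    omega
  have t78 := sup_top π₇ π₈ h7 h8 hidim
  have t79 := sup_top π₇ π₉ h7 h9 (hi1 ▸ hidim)
  have t89 := sup_top π₈ π₉ h8 h9 (hi2 ▸ hidim)
  have disj : ∀ (A B : Submodule (ZMod 2) (Fin 5 → ZMod 2)), A ⊔ B = ⊤ →
      A.dualAnnihilator ⊓ B.dualAnnihilator = ⊥ := by
    intro A B h
    rw [← Submodule.dualAnnihilator_sup_eq, h, Submodule.dualAnnihilator_top]
  have hle : π₉.dualAnnihilator ≤ π₇.dualAnnihilator ⊔ π₈.dualAnnihilator := by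
    rw [← Subspace.dualAnnihilator_inf_eq]
    exact Submodule.dualAnnihilator_anti (by rw [hi1]; exact inf_le_right)
  refine ⟨by rw [ann_finrank, h7], by rw [ann_finrank, h8], by rw [ann_finrank, h9],
    disj _ _ t78, disj _ _ t79, disj _ _ t89, hle, ?_⟩
  rw [sup_eq_left.mpr hle, ← Subspace.dualAnnihilator_inf_eq]
  rw [ann_finrank, hidim]
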